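/- arXiv:2108.04003 — 3 statements merged into one kernel-verified Lean document; each statement's English description precedes it below -/
import Mathlib

section
/- Let β ∈ ℝ and ρ⁺, ρ⁻ > 0, and let X⁺ and X⁻ be independent Poisson random variables with means ρ⁺ and ρ⁻ respectively. Setting ρ = ρ⁺ + ρ⁻ and m = ρ⁺ − ρ⁻, the expectation E[X⁻·e^{β(X⁺−X⁻)} − X⁺·e^{−β(X⁺−X⁻)}] is finite and equals e^{−β + ρ·cosh(β) − ρ}·(ρ·sinh(m·sinh β) − m·cosh(m·sinh β)). -/
open Real

lemma tsum_pow_div_fact (x : ℝ) : ∑' n : ℕ, x ^ n / n.factorial = Real.exp x := by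
  rw [Real.exp_eq_exp_ℝ, NormedSpace.exp_eq_tsum_div]

lemma shift_eq (x : ℝ) (n : ℕ) :
    ((n:ℝ)+1) * x ^ (n+1) / (n+1).factorial = x * (x ^ n / n.factorial) := by
  rw [Nat.factorial_succ, pow_succ]
  push_cast
  have h1 : (n.factorial : ℝ) ≠ 0 := Nat.cast_ne_zero.2 n.factorial_ne_zero
  field_simp

lemma shift_fun (x : ℝ) : (fun n : ℕ => ((n+1:ℕ):ℝ) * x ^ (n+1) / (n+1).factorial)
    = fun n : ℕ => x * (x ^ n / n.factorial) := by
  funext n; push_cast; exact shift_eq x n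

lemma summable_nat_mul (x : ℝ) : Summable (fun n : ℕ => (n:ℝ) * x ^ n / n.factorial) := by
  rw [← summable_nat_add_iff 1]
  rw [show (fun n : ℕ => ((n+1 : ℕ):ℝ) * x ^ (n+1) / (n+1).factorial)
      = fun n : ℕ => x * (x ^ n / n.factorial) from shift_fun x]
  exact (Real.summable_pow_div_factorial x).mul_left x

lemma tsum_nat_mul (x : ℝ) : ∑' n : ℕ, (n:ℝ) * x ^ n / n.factorial = x * Real.exp x := by
  rw [Summable.tsum_eq_zero_add (summable_nat_mul x)]
  simp only [Nat.cast_zero, zero_mul, zero_div, zero_add]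
  rw [show (fun n : ℕ => ((n+1 : ℕ):ℝ) * x ^ (n+1) / (n+1).factorial)
      = fun n : ℕ => x * (x ^ n / n.factorial) from shift_fun x]
  rw [tsum_mul_left, tsum_pow_div_fact]

lemma key (β ρp ρm : ℝ) :
    Real.exp (-ρp) * Real.exp (-ρm) *
      (Real.exp (ρp * Real.exp β) * (ρm * Real.exp (-β) * Real.exp (ρm * Real.exp (-β))) -
        ρp * Real.exp (-β) * Real.exp (ρp * Real.exp (-β)) * Real.exp (ρm * Real.exp β)) =
    Real.exp (-β + (ρp + ρm) * Real.cosh β - (ρp + ρm)) *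
      ((ρp + ρm) * Real.sinh ((ρp - ρm) * Real.sinh β) -
        (ρp - ρm) * Real.cosh ((ρp - ρm) * Real.sinh β)) := by
  have E1 : (-β + (ρp+ρm)*Real.cosh β - (ρp+ρm)) + (ρp-ρm)*Real.sinh β
      = (-ρp) + (-ρm) + (ρp*Real.exp β) + (ρm*Real.exp (-β)) + (-β) := by
    rw [Real.cosh_eq, Real.sinh_eq]; ring
  have E2 : (-β + (ρp+ρm)*Real.cosh β - (ρp+ρm)) + (-((ρp-ρm)*Real.sinh β))
      = (-ρp) + (-ρm) + (ρp*Real.exp (-β)) + (ρm*Real.exp β) + (-β) := by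
    rw [Real.cosh_eq, Real.sinh_eq]; ring
  have h1 : Real.exp (-β + (ρp+ρm)*Real.cosh β - (ρp+ρm)) * Real.exp ((ρp-ρm)*Real.sinh β)
      = Real.exp (-ρp) * Real.exp (-ρm) * Real.exp (ρp*Real.exp β) * Real.exp (ρm*Real.exp (-β)) * Real.exp (-β) := by
    rw [← Real.exp_add, E1, Real.exp_add, Real.exp_add, Real.exp_add, Real.exp_add]
  have h2 : Real.exp (-β + (ρp+ρm)*Real.cosh β - (ρp+ρm)) * Real.exp (-((ρp-ρm)*Real.sinh β))
      = Real.exp (-ρp) * Real.exp (-ρm) * Real.exp (ρp*Real.exp (-β)) * Real.exp (ρm*Real.exp β) * Real.exp (-β) := by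
    rw [← Real.exp_add, E2, Real.exp_add, Real.exp_add, Real.exp_add, Real.exp_add]
  rw [Real.sinh_eq ((ρp - ρm) * Real.sinh β), Real.cosh_eq ((ρp - ρm) * Real.sinh β)]
  have expand : Real.exp (-β + (ρp + ρm) * Real.cosh β - (ρp + ρm)) *
      ((ρp + ρm) * ((Real.exp ((ρp - ρm) * Real.sinh β) - Real.exp (-((ρp - ρm) * Real.sinh β))) / 2) -
        (ρp - ρm) * ((Real.exp ((ρp - ρm) * Real.sinh β) + Real.exp (-((ρp - ρm) * Real.sinh β))) / 2))
      = ρm * (Real.exp (-β + (ρp+ρm)*Real.cosh β - (ρp+ρm)) * Real.exp ((ρp-ρm)*Real.sinh β))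
        - ρp * (Real.exp (-β + (ρp+ρm)*Real.cosh β - (ρp+ρm)) * Real.exp (-((ρp-ρm)*Real.sinh β))) := by
    ring
  rw [expand, h1, h2]; ring

set_option maxHeartbeats 800000 in
lemma hfun1 (β ρp ρm : ℝ) (i j : ℕ) :
    (ρp ^ i / (i.factorial : ℝ) * Real.exp (-ρp)) *
        (ρm ^ j / (j.factorial : ℝ) * Real.exp (-ρm)) *
        ((j : ℝ) * Real.exp (β * ((i : ℝ) - (j : ℝ))) -
          (i : ℝ) * Real.exp (-β * ((i : ℝ) - (j : ℝ))))
      = Real.exp (-ρp) * Real.exp (-ρm) *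
          (((ρp * Real.exp β) ^ i / i.factorial) * ((j : ℝ) * (ρm * Real.exp (-β)) ^ j / j.factorial)
            - ((i : ℝ) * (ρp * Real.exp (-β)) ^ i / i.factorial) * ((ρm * Real.exp β) ^ j / j.factorial)) := by
  simp only [mul_pow, ← Real.exp_nat_mul]
  have e1 : Real.exp (β * ((i:ℝ) - (j:ℝ))) = Real.exp ((i:ℝ) * β) * Real.exp ((j:ℝ) * (-β)) := by
    rw [← Real.exp_add]; ring_nf
  have e2 : Real.exp (-β * ((i:ℝ) - (j:ℝ))) = Real.exp ((i:ℝ) * (-β)) * Real.exp ((j:ℝ) * β) := by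
    rw [← Real.exp_add]; ring_nf
  rw [e1, e2]; ring

lemma summable_prod_aux (x y : ℝ) (hx : 0 ≤ x) (hy : 0 ≤ y) :
    Summable (fun q : ℕ × ℕ => (x ^ q.1 / q.1.factorial) * ((q.2 : ℝ) * y ^ q.2 / q.2.factorial)) :=
  Summable.mul_of_nonneg (f := fun n : ℕ => x ^ n / n.factorial)
    (g := fun n : ℕ => (n : ℝ) * y ^ n / n.factorial)
    (Real.summable_pow_div_factorial x) (summable_nat_mul y)
    (fun i => by positivity) (fun j => by positivity)

lemma summable_prod_aux' (x y : ℝ) (hx : 0 ≤ x) (hy : 0 ≤ y) :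
    Summable (fun q : ℕ × ℕ => ((q.1 : ℝ) * x ^ q.1 / q.1.factorial) * (y ^ q.2 / q.2.factorial)) :=
  Summable.mul_of_nonneg (f := fun n : ℕ => (n : ℝ) * x ^ n / n.factorial)
    (g := fun n : ℕ => y ^ n / n.factorial)
    (summable_nat_mul x) (Real.summable_pow_div_factorial y)
    (fun i => by positivity) (fun j => by positivity)

lemma tsum_prod_aux (x y : ℝ) (hx : 0 ≤ x) (hy : 0 ≤ y) :
    ∑' q : ℕ × ℕ, (x ^ q.1 / q.1.factorial) * ((q.2 : ℝ) * y ^ q.2 / q.2.factorial)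
      = Real.exp x * (y * Real.exp y) := by
  rw [← tsum_pow_div_fact x, ← tsum_nat_mul y]
  refine (tsum_mul_tsum_of_summable_norm (f := fun n : ℕ => x ^ n / n.factorial)
    (g := fun n : ℕ => (n : ℝ) * y ^ n / n.factorial) ?_ ?_).symm
  · refine (Real.summable_pow_div_factorial x).congr fun n => ?_
    rw [Real.norm_of_nonneg (by positivity)]
  · refine (summable_nat_mul y).congr fun n => ?_
    rw [Real.norm_of_nonneg (by positivity)]

lemma tsum_prod_aux' (x y : ℝ) (hx : 0 ≤ x) (hy : 0 ≤ y) :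
    ∑' q : ℕ × ℕ, ((q.1 : ℝ) * x ^ q.1 / q.1.factorial) * (y ^ q.2 / q.2.factorial)
      = (x * Real.exp x) * Real.exp y := by
  rw [← tsum_pow_div_fact y, ← tsum_nat_mul x]
  refine (tsum_mul_tsum_of_summable_norm (f := fun n : ℕ => (n : ℝ) * x ^ n / n.factorial)
    (g := fun n : ℕ => y ^ n / n.factorial) ?_ ?_).symm
  · refine (summable_nat_mul x).congr fun n => ?_
    rw [Real.norm_of_nonneg (by positivity)]
  · refine (Real.summable_pow_div_factorial y).congr fun n => ?_
    rw [Real.norm_of_nonneg (by positivity)]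

set_option maxHeartbeats 1600000 in
/-- For independent Poisson random variables `X⁺, X⁻` with means
`ρ⁺, ρ⁻ > 0`, setting `ρ = ρ⁺ + ρ⁻` and `m = ρ⁺ − ρ⁻`, the expectation
`E[X⁻·e^{β(X⁺−X⁻)} − X⁺·e^{−β(X⁺−X⁻)}]` is finite (the series is summable) and
equals `e^{−β + ρ·cosh β − ρ}·(ρ·sinh(m·sinh β) − m·cosh(m·sinh β))`. -/
theorem poisson_reaction_term (β ρp ρm : ℝ) (hp : 0 < ρp) (hm : 0 < ρm) :
    (Summable fun q : ℕ × ℕ =>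
      (ρp ^ q.1 / (q.1.factorial : ℝ) * Real.exp (-ρp)) *
        (ρm ^ q.2 / (q.2.factorial : ℝ) * Real.exp (-ρm)) *
        ((q.2 : ℝ) * Real.exp (β * ((q.1 : ℝ) - (q.2 : ℝ))) -
          (q.1 : ℝ) * Real.exp (-β * ((q.1 : ℝ) - (q.2 : ℝ))))) ∧
    (∑' q : ℕ × ℕ,
      (ρp ^ q.1 / (q.1.factorial : ℝ) * Real.exp (-ρp)) *
        (ρm ^ q.2 / (q.2.factorial : ℝ) * Real.exp (-ρm)) *
        ((q.2 : ℝ) * Real.exp (β * ((q.1 : ℝ) - (q.2 : ℝ))) -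
          (q.1 : ℝ) * Real.exp (-β * ((q.1 : ℝ) - (q.2 : ℝ))))) =
      Real.exp (-β + (ρp + ρm) * Real.cosh β - (ρp + ρm)) *
        ((ρp + ρm) * Real.sinh ((ρp - ρm) * Real.sinh β) -
          (ρp - ρm) * Real.cosh ((ρp - ρm) * Real.sinh β)) := by
  have ha : 0 ≤ ρp * Real.exp β := by positivity
  have hb : 0 ≤ ρm * Real.exp (-β) := by positivity
  have ha' : 0 ≤ ρp * Real.exp (-β) := by positivity
  have hb' : 0 ≤ ρm * Real.exp β := by positivity
  have hfun : (fun q : ℕ × ℕ =>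
      (ρp ^ q.1 / (q.1.factorial : ℝ) * Real.exp (-ρp)) *
        (ρm ^ q.2 / (q.2.factorial : ℝ) * Real.exp (-ρm)) *
        ((q.2 : ℝ) * Real.exp (β * ((q.1 : ℝ) - (q.2 : ℝ))) -
          (q.1 : ℝ) * Real.exp (-β * ((q.1 : ℝ) - (q.2 : ℝ)))))
      = fun q : ℕ × ℕ => Real.exp (-ρp) * Real.exp (-ρm) *
          (((ρp * Real.exp β) ^ q.1 / q.1.factorial) *
              ((q.2 : ℝ) * (ρm * Real.exp (-β)) ^ q.2 / q.2.factorial)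
            - ((q.1 : ℝ) * (ρp * Real.exp (-β)) ^ q.1 / q.1.factorial) *
              ((ρm * Real.exp β) ^ q.2 / q.2.factorial)) :=
    funext fun q => hfun1 β ρp ρm q.1 q.2
  have hS1 := summable_prod_aux (ρp * Real.exp β) (ρm * Real.exp (-β)) ha hb
  have hS2 := summable_prod_aux' (ρp * Real.exp (-β)) (ρm * Real.exp β) ha' hb'
  constructor
  · rw [hfun]
    exact ((hS1.sub hS2).mul_left _)
  · rw [hfun, tsum_mul_left, Summable.tsum_sub hS1 hS2,
      tsum_prod_aux _ _ ha hb, tsum_prod_aux' _ _ ha' hb']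
    exact key β ρp ρm
end

section
/- Let χ = {0, +1, −1}, and for a ∈ χ set σ⁺(a) = 1 if a = +1 and 0 otherwise, and σ(a) = 1 if a ≠ 0 and 0 otherwise. For a configuration η : ℤ² → χ, define the symmetric current of + particles across the edge (0, e₁) by j(η) = σ⁺(η(0))·(1 − σ(η(e₁))) − σ⁺(η(e₁))·(1 − σ(η(0))), where e₁ = (1,0). Then there exist no k ∈ ℕ and no function g : ({−k,…,k}² → χ) → ℝ such that for every configuration η : ℤ² → χ one has j(η) = g(η restricted to {−k,…,k}²) − g((τ_{e₁}η) restricted to {−k,…,k}²), where (τ_{e₁}η)(y) = η(y + e₁). In other words, the symmetric + current of the active exclusion process is not a discrete gradient of any local function. -/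
/-- The single-site state space `χ = {0, +1, −1}` of the active exclusion process. -/
inductive Chi : Type
  | zero : Chi
  | plus : Chi
  | minus : Chi
  deriving DecidableEq

/-- `σ⁺(a) = 1` if `a = +1`, and `0` otherwise. -/
def sigmaPlus : Chi → ℝ := fun a => if a = Chi.plus then 1 else 0

/-- `σ(a) = 1` if `a ≠ 0`, and `0` otherwise. -/
def sigmaTot : Chi → ℝ := fun a => if a = Chi.zero then 0 else 1

/-- The symmetric current of `+` particles across the edge `(0, e₁)`:
`j(η) = σ⁺(η(0))·(1 − σ(η(e₁))) − σ⁺(η(e₁))·(1 − σ(η(0)))`. -/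
def symCurrent (η : ℤ × ℤ → Chi) : ℝ :=
  sigmaPlus (η (0, 0)) * (1 - sigmaTot (η (1, 0))) -
    sigmaPlus (η (1, 0)) * (1 - sigmaTot (η (0, 0)))

/-- The symmetric `+` current of the two-dimensional active exclusion
process is not a discrete gradient of any local function: there exist no `k ∈ ℕ`
and no function `g` of the restriction of configurations to the window
`{−k,…,k}²` such that for every configuration `η : ℤ² → χ`,
`j(η) = g(η|window) − g((τ_{e₁}η)|window)`, where `(τ_{e₁}η)(y) = η(y + e₁)`. -/
theorem active_exclusion_nongradient :
    ¬ ∃ (k : ℕ) (g : ({y : ℤ × ℤ // |y.1| ≤ (k : ℤ) ∧ |y.2| ≤ (k : ℤ)} → Chi) → ℝ),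
      ∀ η : ℤ × ℤ → Chi,
        symCurrent η =
          g (fun y => η y.val) - g (fun y => η (y.val + ((1 : ℤ), (0 : ℤ)))) := by
  rintro ⟨k, g, hg⟩
  set η : ℤ × ℤ → Chi := fun p =>
    if p.1 % 3 = 0 then Chi.plus else if p.1 % 3 = 1 then Chi.zero else Chi.minus with hη
  have h0 := hg η
  have h1 := hg (fun p => η (p + ((1 : ℤ), (0 : ℤ))))
  have h2 := hg (fun p => η (p + ((2 : ℤ), (0 : ℤ))))
  have key : ∀ p q : ℤ × ℤ, p.1 % 3 = q.1 % 3 → η p = η q := by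
    intro p q h; simp only [hη]; rw [h]
  have e1 : (fun y : {y : ℤ × ℤ // |y.1| ≤ (k : ℤ) ∧ |y.2| ≤ (k : ℤ)} =>
      η (y.val + ((1 : ℤ), (0 : ℤ)) + ((1 : ℤ), (0 : ℤ)))) =
      fun y => η (y.val + ((2 : ℤ), (0 : ℤ))) :=
    funext fun y => key _ _ (by simp only [Prod.fst_add]; omega)
  have e2 : (fun y : {y : ℤ × ℤ // |y.1| ≤ (k : ℤ) ∧ |y.2| ≤ (k : ℤ)} =>
      η (y.val + ((1 : ℤ), (0 : ℤ)) + ((2 : ℤ), (0 : ℤ)))) = fun y => η y.val :=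
    funext fun y => key _ _ (by simp only [Prod.fst_add]; omega)
  rw [e1] at h1
  rw [e2] at h2
  have c0 : symCurrent η = 1 := by
    simp [symCurrent, hη, sigmaPlus, sigmaTot]
  have c1 : symCurrent (fun p => η (p + ((1 : ℤ), (0 : ℤ)))) = 0 := by
    simp [symCurrent, hη, sigmaPlus, sigmaTot]
  have c2 : symCurrent (fun p => η (p + ((2 : ℤ), (0 : ℤ)))) = 0 := by
    simp [symCurrent, hη, sigmaPlus, sigmaTot]
  rw [c0] at h0; rw [c1] at h1; rw [c2] at h2
  linarith
end

section
/- Let β > 0 and ρ > 0, and set s = sinh β. Consider the equation m·cosh(s·m) = ρ·sinh(s·m) (equivalently, m = ρ·tanh(s·m)) for m ∈ ℝ. Then: (i) if ρ·sinh β > 1, there exists m₀ with 0 < m₀ < ρ satisfying m₀ = ρ·tanh(s·m₀); (ii) if ρ·sinh β ≤ 1, then m = 0 is the only nonnegative solution, i.e. no m > 0 satisfies m = ρ·tanh(s·m). -/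
open Real Set Filter Topology

lemma sinh_lt_mul_cosh {x : ℝ} (hx : 0 < x) : Real.sinh x < x * Real.cosh x := by
  have key : StrictMonoOn (fun x => x * Real.cosh x - Real.sinh x) (Ici 0) := by
    apply strictMonoOn_of_deriv_pos (convex_Ici 0)
    · exact ((continuous_id.mul Real.continuous_cosh).sub Real.continuous_sinh).continuousOn
    · intro y hy
      rw [interior_Ici] at hy
      have hd : HasDerivAt (fun x => x * Real.cosh x - Real.sinh x) (y * Real.sinh y) y := by
        have := ((hasDerivAt_id y).mul (Real.hasDerivAt_cosh y)).sub (Real.hasDerivAt_sinh y)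
        refine this.congr_deriv ?_
        simp only [id]; ring
      rw [hd.deriv]
      exact mul_pos hy (Real.sinh_pos_iff.mpr hy)
  have h0 : (0:ℝ) ∈ Ici (0:ℝ) := self_mem_Ici
  have := key h0 (le_of_lt hx) hx
  simpa using this

lemma tanh_lt_self' {x : ℝ} (hx : 0 < x) : Real.tanh x < x := by
  rw [Real.tanh_eq_sinh_div_cosh, div_lt_iff₀ (Real.cosh_pos x)]
  exact sinh_lt_mul_cosh hx

lemma tanh_lt_one' (x : ℝ) : Real.tanh x < 1 := by
  rw [Real.tanh_eq_sinh_div_cosh, div_lt_one (Real.cosh_pos x)]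
  exact Real.sinh_lt_cosh x

lemma tanh_eq_fun : Real.tanh = fun x => Real.sinh x / Real.cosh x := by
  funext x; exact Real.tanh_eq_sinh_div_cosh x

lemma continuous_tanh' : Continuous Real.tanh := by
  rw [tanh_eq_fun]
  exact Real.continuous_sinh.div Real.continuous_cosh fun x => (Real.cosh_pos x).ne'

lemma hasDerivAt_tanh_zero : HasDerivAt Real.tanh 1 0 := by
  have h : HasDerivAt (fun x => Real.sinh x / Real.cosh x)
      ((Real.cosh 0 * Real.cosh 0 - Real.sinh 0 * Real.sinh 0) / Real.cosh 0 ^ 2) 0 :=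
    (Real.hasDerivAt_sinh 0).div (Real.hasDerivAt_cosh 0) (Real.cosh_pos 0).ne'
  simp only [Real.cosh_zero, Real.sinh_zero] at h
  norm_num at h
  rw [tanh_eq_fun]
  exact h

/-- For `β > 0`, `ρ > 0` and `s = sinh β`, consider the equation
`m = ρ·tanh(s·m)` (equivalently `m·cosh(s·m) = ρ·sinh(s·m)`).
(i) If `ρ·sinh β > 1`, there exists `m₀` with `0 < m₀ < ρ` satisfying
`m₀ = ρ·tanh(s·m₀)`.
(ii) If `ρ·sinh β ≤ 1`, then `m = 0` is the only nonnegative solution: no `m > 0`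
satisfies `m = ρ·tanh(s·m)`. -/
theorem magnetization_phase_transition (β ρ : ℝ) (hβ : 0 < β) (hρ : 0 < ρ) :
    (1 < ρ * Real.sinh β →
      ∃ m₀ : ℝ, 0 < m₀ ∧ m₀ < ρ ∧ m₀ = ρ * Real.tanh (Real.sinh β * m₀)) ∧
    (ρ * Real.sinh β ≤ 1 →
      ∀ m : ℝ, 0 < m → m ≠ ρ * Real.tanh (Real.sinh β * m)) := by
  set s := Real.sinh β with hs_def
  have hs : 0 < s := Real.sinh_pos_iff.mpr hβ
  constructor
  · intro h1
    set f : ℝ → ℝ := fun m => ρ * Real.tanh (s * m) - m with hf_def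
    have hf0 : f 0 = 0 := by simp [hf_def]
    have hfρ : f ρ < 0 := by
      have h := tanh_lt_one' (s * ρ)
      have h2 := mul_lt_mul_of_pos_left h hρ
      simp only [mul_one] at h2
      simp only [hf_def]
      linarith
    have hd : HasDerivAt f (ρ * s - 1) 0 := by
      have h1' : HasDerivAt (fun m : ℝ => s * m) s 0 := by
        simpa using (hasDerivAt_id (0:ℝ)).const_mul s
      have h2 : HasDerivAt (fun m => Real.tanh (s * m)) (1 * s) 0 := by
        have h0 : HasDerivAt Real.tanh 1 ((fun m : ℝ => s * m) 0) := by
          simpa using hasDerivAt_tanh_zero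
        exact h0.comp 0 h1'
      have h3 := (h2.const_mul ρ).sub (hasDerivAt_id (0:ℝ))
      refine h3.congr_deriv ?_
      ring
    have hslope : Tendsto (slope f 0) (𝓝[≠] 0) (𝓝 (ρ * s - 1)) :=
      hasDerivAt_iff_tendsto_slope.mp hd
    have hpos : (0:ℝ) < ρ * s - 1 := by linarith
    have hev0 : ∀ᶠ m in 𝓝[≠] (0:ℝ), 0 < slope f 0 m :=
      hslope.eventually (eventually_gt_nhds hpos)
    have hev : ∀ᶠ m in 𝓝[>] (0:ℝ), 0 < slope f 0 m :=
      hev0.filter_mono (nhdsWithin_mono 0 fun x (hx : x ∈ Ioi (0:ℝ)) => ne_of_gt hx)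
    have hev2 : ∀ᶠ m in 𝓝[>] (0:ℝ), m < ρ :=
      nhdsWithin_le_nhds (Iio_mem_nhds hρ)
    obtain ⟨m₁, hm₁slope, hm₁ρ, hm₁pos⟩ :=
      (hev.and (hev2.and (self_mem_nhdsWithin (s := Ioi (0:ℝ))))).exists
    have hm₁pos' : (0:ℝ) < m₁ := hm₁pos
    have hfm₁ : 0 < f m₁ := by
      have : slope f 0 m₁ = f m₁ / m₁ := by
        simp [slope_def_field, hf0]
      rw [this] at hm₁slope
      exact (div_pos_iff.mp hm₁slope).resolve_right (fun h => absurd h.2 (not_lt.mpr hm₁pos'.le)) |>.1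
    -- IVT on [m₁, ρ]
    have hcont : ContinuousOn f (Icc m₁ ρ) :=
      ((continuous_const.mul (continuous_tanh'.comp (continuous_const.mul continuous_id))).sub
        continuous_id).continuousOn
    have hsub : Icc (f ρ) (f m₁) ⊆ f '' Icc m₁ ρ :=
      intermediate_value_Icc' hm₁ρ.le hcont
    have h0mem : (0:ℝ) ∈ Icc (f ρ) (f m₁) := ⟨hfρ.le, hfm₁.le⟩
    obtain ⟨m₀, hm₀mem, hm₀⟩ := hsub h0mem
    refine ⟨m₀, lt_of_lt_of_le hm₁pos' hm₀mem.1, ?_, ?_⟩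
    · rcases lt_or_eq_of_le hm₀mem.2 with h | h
      · exact h
      · exfalso; rw [h] at hm₀; linarith
    · have : ρ * Real.tanh (s * m₀) - m₀ = 0 := hm₀
      linarith
  · intro h2 m hm heq
    have h3 : Real.tanh (s * m) < s * m := tanh_lt_self' (mul_pos hs hm)
    have h4 : ρ * Real.tanh (s * m) < ρ * (s * m) := mul_lt_mul_of_pos_left h3 hρ
    have h5 : ρ * (s * m) ≤ m := by
      have := mul_le_mul_of_nonneg_right h2 (le_of_lt hm)
      calc ρ * (s * m) = ρ * s * m := by ring
        _ ≤ 1 * m := this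
        _ = m := one_mul m
    linarith [heq ▸ h4]
end
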